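/- Let f, a² : [0,1] → ℝ be continuous with a² ≥ 0. For fixed c ∈ ℝ, the function [0,1] ∋ w ↦ R_{f,a²}(w,c) := inf { (ν(f) − c)²/ν(a²) : ν ∈ P([0,1]), ν(id) = w } is convex in w, where the ratio is interpreted as 0 when both numerator and denominator vanish and +∞ when only the denominator vanishes. -/

import Mathlib

open MeasureTheory
open scoped ENNReal

/-- The rate integrand `R_{f,a²}(w,c)`, valued in `ℝ≥0∞` so that the ratio is `0` when both
numerator and denominator vanish and `+∞` when only the denominator vanishes. -/
noncomputable def Rfa (f a2 : ℝ → ℝ) (w c : ℝ) : ℝ≥0∞ :=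
  sInf {r : ℝ≥0∞ | ∃ ν : Measure ℝ, IsProbabilityMeasure ν ∧ ν (Set.Icc (0 : ℝ) 1)ᶜ = 0 ∧
    (∫ x, x ∂ν) = w ∧
    r = ENNReal.ofReal (((∫ x, f x ∂ν) - c) ^ 2) / ENNReal.ofReal (∫ x, a2 x ∂ν)}

private lemma real_key (u v p q : ℝ) (hp : 0 < p) (hq : 0 < q) :
    (u + v) ^ 2 / (p + q) ≤ u ^ 2 / p + v ^ 2 / q := by
  rw [div_add_div _ _ (ne_of_gt hp) (ne_of_gt hq), div_le_div_iff₀ (by positivity) (by positivity)]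
  nlinarith [sq_nonneg (u * q - v * p), mul_pos hp hq]

private lemma ennreal_key (l x₁ x₂ y₁ y₂ : ℝ) (hl0 : 0 < l) (hl1 : l < 1)
    (hy₁ : 0 ≤ y₁) (hy₂ : 0 ≤ y₂) :
    ENNReal.ofReal ((l * x₁ + (1 - l) * x₂) ^ 2) / ENNReal.ofReal (l * y₁ + (1 - l) * y₂) ≤
      ENNReal.ofReal l * (ENNReal.ofReal (x₁ ^ 2) / ENNReal.ofReal y₁) +
      ENNReal.ofReal (1 - l) * (ENNReal.ofReal (x₂ ^ 2) / ENNReal.ofReal y₂) := by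
  have hl1' : 0 < 1 - l := by linarith
  by_cases htop : ENNReal.ofReal l * (ENNReal.ofReal (x₁ ^ 2) / ENNReal.ofReal y₁) +
      ENNReal.ofReal (1 - l) * (ENNReal.ofReal (x₂ ^ 2) / ENNReal.ofReal y₂) = ⊤
  · exact htop ▸ le_top
  have hne1 : ENNReal.ofReal (x₁ ^ 2) / ENNReal.ofReal y₁ ≠ ⊤ := by
    intro h
    apply htop
    rw [h, ENNReal.mul_top (by simp [ENNReal.ofReal_eq_zero]; linarith), top_add]
  have hne2 : ENNReal.ofReal (x₂ ^ 2) / ENNReal.ofReal y₂ ≠ ⊤ := by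
    intro h
    apply htop
    rw [h, ENNReal.mul_top (by simp [ENNReal.ofReal_eq_zero]; linarith), add_top]
  have h₁ : y₁ = 0 → x₁ = 0 := by
    intro hy
    by_contra hx
    exact hne1 (ENNReal.div_eq_top.mpr (Or.inl ⟨by
      simp [ENNReal.ofReal_eq_zero]; positivity, by simp [hy]⟩))
  have h₂ : y₂ = 0 → x₂ = 0 := by
    intro hy
    by_contra hx
    exact hne2 (ENNReal.div_eq_top.mpr (Or.inl ⟨by
      simp [ENNReal.ofReal_eq_zero]; positivity, by simp [hy]⟩))
  rcases eq_or_lt_of_le hy₁ with hp₁ | hp₁ <;> rcases eq_or_lt_of_le hy₂ with hp₂ | hp₂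
  · -- y₁ = 0, y₂ = 0
    have hx₁ : x₁ = 0 := h₁ hp₁.symm
    have hx₂ : x₂ = 0 := h₂ hp₂.symm
    simp [hx₁, hx₂]
  · -- y₁ = 0, y₂ > 0
    have hx₁ : x₁ = 0 := h₁ hp₁.symm
    have hLHS : ENNReal.ofReal ((l * x₁ + (1 - l) * x₂) ^ 2) /
        ENNReal.ofReal (l * y₁ + (1 - l) * y₂) =
        ENNReal.ofReal ((1 - l) * (x₂ ^ 2 / y₂)) := by
      rw [← ENNReal.ofReal_div_of_pos (by rw [← hp₁]; simpa using mul_pos hl1' hp₂)]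
      congr 1
      rw [hx₁, ← hp₁]
      field_simp
      ring
    have hR : ENNReal.ofReal (1 - l) * (ENNReal.ofReal (x₂ ^ 2) / ENNReal.ofReal y₂) =
        ENNReal.ofReal ((1 - l) * (x₂ ^ 2 / y₂)) := by
      rw [← ENNReal.ofReal_div_of_pos hp₂, ← ENNReal.ofReal_mul hl1'.le]
    rw [hLHS, ← hR]
    exact self_le_add_left _ _
  · -- y₁ > 0, y₂ = 0
    have hx₂ : x₂ = 0 := h₂ hp₂.symm
    have hLHS : ENNReal.ofReal ((l * x₁ + (1 - l) * x₂) ^ 2) /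
        ENNReal.ofReal (l * y₁ + (1 - l) * y₂) =
        ENNReal.ofReal (l * (x₁ ^ 2 / y₁)) := by
      rw [← ENNReal.ofReal_div_of_pos (by rw [← hp₂]; simpa using mul_pos hl0 hp₁)]
      congr 1
      rw [hx₂, ← hp₂]
      field_simp
      ring
    have hR : ENNReal.ofReal l * (ENNReal.ofReal (x₁ ^ 2) / ENNReal.ofReal y₁) =
        ENNReal.ofReal (l * (x₁ ^ 2 / y₁)) := by
      rw [← ENNReal.ofReal_div_of_pos hp₁, ← ENNReal.ofReal_mul hl0.le]
    rw [hLHS, ← hR]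
    exact le_self_add
  · -- both positive
    have hD : 0 < l * y₁ + (1 - l) * y₂ := by positivity
    rw [← ENNReal.ofReal_div_of_pos hD, ← ENNReal.ofReal_div_of_pos hp₁,
      ← ENNReal.ofReal_div_of_pos hp₂, ← ENNReal.ofReal_mul hl0.le,
      ← ENNReal.ofReal_mul hl1'.le, ← ENNReal.ofReal_add (by positivity) (by positivity)]
    apply ENNReal.ofReal_le_ofReal
    have key := real_key (l * x₁) ((1 - l) * x₂) (l * y₁) ((1 - l) * y₂)
      (mul_pos hl0 hp₁) (mul_pos hl1' hp₂)
    have e1 : (l * x₁) ^ 2 / (l * y₁) = l * (x₁ ^ 2 / y₁) := by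
      field_simp
    have e2 : ((1 - l) * x₂) ^ 2 / ((1 - l) * y₂) = (1 - l) * (x₂ ^ 2 / y₂) := by
      field_simp
    rw [e1, e2] at key
    exact key

private lemma integrable_of_support (g : ℝ → ℝ) (hg : ContinuousOn g (Set.Icc 0 1))
    (ν : Measure ℝ) [IsProbabilityMeasure ν] (hν : ν (Set.Icc (0 : ℝ) 1)ᶜ = 0) :
    Integrable g ν := by
  have hres : ν.restrict (Set.Icc (0 : ℝ) 1) = ν :=
    Measure.restrict_eq_self_of_ae_mem (ae_iff.mpr hν)
  rw [← hres]
  exact hg.integrableOn_compact isCompact_Icc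

/-- For fixed `c`, the function `w ↦ R_{f,a²}(w,c)` is convex on `[0,1]`. -/
theorem stmt_6 (f a2 : ℝ → ℝ) (hf : ContinuousOn f (Set.Icc 0 1))
    (ha2c : ContinuousOn a2 (Set.Icc 0 1))
    (ha2nn : ∀ v ∈ Set.Icc (0 : ℝ) 1, 0 ≤ a2 v) (c : ℝ) :
    ∀ w₁ ∈ Set.Icc (0 : ℝ) 1, ∀ w₂ ∈ Set.Icc (0 : ℝ) 1, ∀ l : ℝ, 0 ≤ l → l ≤ 1 →
      Rfa f a2 (l * w₁ + (1 - l) * w₂) c ≤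
        ENNReal.ofReal l * Rfa f a2 w₁ c + ENNReal.ofReal (1 - l) * Rfa f a2 w₂ c := by
  intro w₁ hw₁ w₂ hw₂ l hl0 hl1
  rcases eq_or_lt_of_le hl0 with h0 | h0
  · rw [← h0]; norm_num
  rcases eq_or_lt_of_le hl1 with h1 | h1
  · rw [h1]; norm_num
  have hl1' : 0 < 1 - l := by linarith
  -- The key step: for any elements of the two defining sets, the inf is below the combination
  have key : ∀ r₁ ∈ {r : ℝ≥0∞ | ∃ ν : Measure ℝ, IsProbabilityMeasure ν ∧
        ν (Set.Icc (0 : ℝ) 1)ᶜ = 0 ∧ (∫ x, x ∂ν) = w₁ ∧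
        r = ENNReal.ofReal (((∫ x, f x ∂ν) - c) ^ 2) / ENNReal.ofReal (∫ x, a2 x ∂ν)},
      ∀ r₂ ∈ {r : ℝ≥0∞ | ∃ ν : Measure ℝ, IsProbabilityMeasure ν ∧
        ν (Set.Icc (0 : ℝ) 1)ᶜ = 0 ∧ (∫ x, x ∂ν) = w₂ ∧
        r = ENNReal.ofReal (((∫ x, f x ∂ν) - c) ^ 2) / ENNReal.ofReal (∫ x, a2 x ∂ν)},
      Rfa f a2 (l * w₁ + (1 - l) * w₂) c ≤
        ENNReal.ofReal l * r₁ + ENNReal.ofReal (1 - l) * r₂ := by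
    rintro r₁ ⟨ν₁, hP₁, hs₁, hm₁, rfl⟩ r₂ ⟨ν₂, hP₂, hs₂, hm₂, rfl⟩
    set ν : Measure ℝ := ENNReal.ofReal l • ν₁ + ENNReal.ofReal (1 - l) • ν₂ with hν
    have hPν : IsProbabilityMeasure ν := by
      constructor
      simp only [hν, Measure.add_apply, Measure.smul_apply, measure_univ, smul_eq_mul, mul_one]
      rw [← ENNReal.ofReal_add hl0 hl1'.le]
      norm_num
    have hsν : ν (Set.Icc (0 : ℝ) 1)ᶜ = 0 := by
      simp only [hν, Measure.add_apply, Measure.smul_apply, hs₁, hs₂, smul_eq_mul, mul_zero,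
        add_zero]
    have hint : ∀ g : ℝ → ℝ, ContinuousOn g (Set.Icc 0 1) →
        (∫ x, g x ∂ν) = l * (∫ x, g x ∂ν₁) + (1 - l) * (∫ x, g x ∂ν₂) := by
      intro g hg
      rw [hν, integral_add_measure
        ((integrable_of_support g hg ν₁ hs₁).smul_measure ENNReal.ofReal_ne_top)
        ((integrable_of_support g hg ν₂ hs₂).smul_measure ENNReal.ofReal_ne_top),
        integral_smul_measure, integral_smul_measure,
        ENNReal.toReal_ofReal hl0, ENNReal.toReal_ofReal hl1'.le]
      simp
    have hmean : (∫ x, x ∂ν) = l * w₁ + (1 - l) * w₂ := by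
      rw [hint (fun x => x) continuous_id.continuousOn, hm₁, hm₂]
    have hfint : (∫ x, f x ∂ν) = l * (∫ x, f x ∂ν₁) + (1 - l) * (∫ x, f x ∂ν₂) := hint f hf
    have haint : (∫ x, a2 x ∂ν) = l * (∫ x, a2 x ∂ν₁) + (1 - l) * (∫ x, a2 x ∂ν₂) :=
      hint a2 ha2c
    have hanonneg : ∀ (μ : Measure ℝ), μ (Set.Icc (0 : ℝ) 1)ᶜ = 0 → 0 ≤ ∫ x, a2 x ∂μ := by
      intro μ hμ
      apply integral_nonneg_of_ae
      filter_upwards [ae_iff.mpr hμ] with x hx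
      exact ha2nn x hx
    calc Rfa f a2 (l * w₁ + (1 - l) * w₂) c ≤
        ENNReal.ofReal (((∫ x, f x ∂ν) - c) ^ 2) / ENNReal.ofReal (∫ x, a2 x ∂ν) :=
          sInf_le ⟨ν, hPν, hsν, hmean, rfl⟩
      _ ≤ _ := by
          rw [hfint, haint]
          have hrw : l * (∫ x, f x ∂ν₁) + (1 - l) * (∫ x, f x ∂ν₂) - c =
              l * ((∫ x, f x ∂ν₁) - c) + (1 - l) * ((∫ x, f x ∂ν₂) - c) := by ring
          rw [hrw]
          exact ennreal_key l _ _ _ _ h0 h1 (hanonneg ν₁ hs₁) (hanonneg ν₂ hs₂)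
  -- Now pass to the infima
  have e1 : ENNReal.ofReal l * Rfa f a2 w₁ c = ⨅ r₁ ∈ {r : ℝ≥0∞ | ∃ ν : Measure ℝ,
      IsProbabilityMeasure ν ∧ ν (Set.Icc (0 : ℝ) 1)ᶜ = 0 ∧ (∫ x, x ∂ν) = w₁ ∧
      r = ENNReal.ofReal (((∫ x, f x ∂ν) - c) ^ 2) / ENNReal.ofReal (∫ x, a2 x ∂ν)},
      ENNReal.ofReal l * r₁ := by
    rw [Rfa, sInf_eq_iInf, ENNReal.mul_iInf_of_ne (by simpa using h0) ENNReal.ofReal_ne_top]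
    congr 1
    ext r₁
    rw [ENNReal.mul_iInf_of_ne (by simpa using h0) ENNReal.ofReal_ne_top]
  have e2 : ENNReal.ofReal (1 - l) * Rfa f a2 w₂ c = ⨅ r₂ ∈ {r : ℝ≥0∞ | ∃ ν : Measure ℝ,
      IsProbabilityMeasure ν ∧ ν (Set.Icc (0 : ℝ) 1)ᶜ = 0 ∧ (∫ x, x ∂ν) = w₂ ∧
      r = ENNReal.ofReal (((∫ x, f x ∂ν) - c) ^ 2) / ENNReal.ofReal (∫ x, a2 x ∂ν)},
      ENNReal.ofReal (1 - l) * r₂ := by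
    rw [Rfa, sInf_eq_iInf, ENNReal.mul_iInf_of_ne (by simpa using hl1') ENNReal.ofReal_ne_top]
    congr 1
    ext r₂
    rw [ENNReal.mul_iInf_of_ne (by simpa using hl1') ENNReal.ofReal_ne_top]
  rw [e1, e2]
  rw [ENNReal.iInf_add]
  refine le_iInf fun r₁ => ?_
  rw [ENNReal.iInf_add]
  refine le_iInf fun hr₁ => ?_
  rw [ENNReal.add_iInf]
  refine le_iInf fun r₂ => ?_
  rw [ENNReal.add_iInf]
  exact le_iInf fun hr₂ => key r₁ hr₁ r₂ hr₂
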